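/- In a ν-binary tree, every non-root node has either a node strictly above it in the same column or a node strictly to its left in the same row (and by ν-compatibility, not both). -/
import Mathlib


/-- Steps of a (Schröder) lattice path: north, east, diagonal. -/
inductive Step : Type
  | N | E | D
deriving DecidableEq, Repr

/-- Total horizontal displacement of a path. -/
def eLen (p : List Step) : ℕ := p.count Step.E + p.count Step.D

/-- Total vertical displacement of a path. -/
def nLen (p : List Step) : ℕ := p.count Step.N + p.count Step.D

/-- A lattice path uses only `N` and `E` steps. -/
def IsLatticePath (ν : List Step) : Prop := Step.D ∉ ν

/-- `colVal p x` is twice the starting height of the step of `p` crossing the vertical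
strip between abscissas `x` and `x+1`, plus `1` if that step is diagonal.  Comparing these
values columnwise is equivalent to comparing the heights of the paths over each strip. -/
def colVal : List Step → ℕ → ℕ
  | [], _ => 0
  | Step.N :: p, x => colVal p x + 2
  | Step.E :: _, 0 => 0
  | Step.E :: p, x+1 => colVal p x
  | Step.D :: _, 0 => 1
  | Step.D :: p, x+1 => colVal p x + 2

/-- `π` stays weakly above `ρ` (same endpoints intended). -/
def WeaklyAbove (π ρ : List Step) : Prop := ∀ x, colVal ρ x ≤ colVal π x

/-- Replace every peak (consecutive `NE`) of a path by a diagonal step; applied to `ν`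
this gives the path `μ` of the large ν-Schröder path definition. -/
def cutPeaks : List Step → List Step
  | [] => []
  | Step.N :: Step.E :: p => Step.D :: cutPeaks p
  | s :: p => s :: cutPeaks p

/-- A ν-Dyck path: an `N,E` path with the same endpoints as `ν` staying weakly above `ν`. -/
def IsNuDyck (ν π : List Step) : Prop :=
  Step.D ∉ π ∧ eLen π = eLen ν ∧ nLen π = nLen ν ∧ WeaklyAbove π ν

/-- A (small) ν-Schröder path: an `N,E,D` path with the same endpoints as `ν` staying weakly
above `ν` (this automatically forbids diagonal steps on the ν-diagonal). -/
def IsSmallSchroder (ν π : List Step) : Prop :=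
  eLen π = eLen ν ∧ nLen π = nLen ν ∧ WeaklyAbove π ν

/-- A large ν-Schröder path: an `N,E,D` path with the same endpoints as `ν` staying weakly
above the path obtained from `ν` by replacing each peak by a diagonal step. -/
def IsLargeSchroder (ν π : List Step) : Prop :=
  eLen π = eLen ν ∧ nLen π = nLen ν ∧ WeaklyAbove π (cutPeaks ν)

/-- Number of peaks (consecutive `NE` pairs). -/
def peaks (p : List Step) : ℕ := (p.zip p.tail).count (Step.N, Step.E)

/-- Number of valleys (consecutive `EN` pairs). -/
def valleys (p : List Step) : ℕ := (p.zip p.tail).count (Step.E, Step.N)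

/-- Lattice points at which valleys of a path occur (starting the path at `(x,y)`). -/
def valleyPts : List Step → ℕ → ℕ → List (ℕ × ℕ)
  | [], _, _ => []
  | Step.E :: p, x, y =>
      (if p.head? = some Step.N then [(x+1, y)] else []) ++ valleyPts p (x+1) y
  | Step.N :: p, x, y => valleyPts p x (y+1)
  | Step.D :: p, x, y => valleyPts p (x+1) (y+1)

/-- Lattice points at which high peaks (peaks strictly above `ν`) of a path occur. -/
def highPeakPts (ν : List Step) : List Step → ℕ → ℕ → List (ℕ × ℕ)
  | [], _, _ => []
  | Step.N :: p, x, y =>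
      (if p.head? = some Step.E ∧ colVal ν x < 2*(y+1) then [(x, y+1)] else []) ++
        highPeakPts ν p x (y+1)
  | Step.E :: p, x, y => highPeakPts ν p (x+1) y
  | Step.D :: p, x, y => highPeakPts ν p (x+1) (y+1)

/-- Number of high peaks of `π` relative to `ν`. -/
def highPeaks (ν π : List Step) : ℕ := (highPeakPts ν π 0 0).length

/-- j-th ν-Narayana number: number of ν-Dyck paths with exactly `j` valleys. -/
noncomputable def Nar (ν : List Step) (j : ℕ) : ℕ :=
  Nat.card {π : List Step // IsNuDyck ν π ∧ valleys π = j}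

/-- Number of small ν-Schröder paths with exactly `i` diagonal steps. -/
noncomputable def schNum (ν : List Step) (i : ℕ) : ℕ :=
  Nat.card {π : List Step // IsSmallSchroder ν π ∧ π.count Step.D = i}

/-- `lowH ν x` is the lowest height of a point of `ν` at abscissa `x`. -/
def lowH : List Step → ℕ → ℕ
  | _, 0 => 0
  | [], _+1 => 0
  | Step.N :: p, x+1 => lowH p (x+1) + 1
  | Step.E :: p, x+1 => lowH p x
  | Step.D :: p, x+1 => lowH p x + 1

/-- The lowest lattice path from `(0,0)` to `(b,a)` weakly above the line segment
from `(0,0)` to `(b,a)`. -/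
def nuAB (a b : ℕ) : List Step :=
  (List.range b).flatMap (fun x =>
    List.replicate (((x+1)*a + b - 1)/b - (x*a + b - 1)/b) Step.N ++ [Step.E])

/-- Number of large rational `(a,b)`-Schröder paths with `i` diagonal steps. -/
noncomputable def largeCount (a b i : ℕ) : ℕ :=
  Nat.card {π : List Step // IsLargeSchroder (nuAB a b) π ∧ π.count Step.D = i}

/-- Number of small rational `(a,b)`-Schröder paths with `i` diagonal steps. -/
noncomputable def smallCount (a b i : ℕ) : ℕ :=
  Nat.card {π : List Step // IsSmallSchroder (nuAB a b) π ∧ π.count Step.D = i}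

/-- Binomial coefficient with an integer lower entry (zero when negative). -/
def chooseZ (n : ℕ) (k : ℤ) : ℕ := if 0 ≤ k then n.choose k.toNat else 0

/-- The region weakly above `ν` in the rectangle `[0,b] × [0,a]`. -/
def InRegion (ν : List Step) (p : ℕ × ℕ) : Prop :=
  p.1 ≤ eLen ν ∧ p.2 ≤ nLen ν ∧ lowH ν p.1 ≤ p.2

/-- Two points of the region are ν-incompatible if one is strictly southwest of the other and
the rectangle they span lies in the region (equivalently its bottom-right corner does). -/
def Incompat (ν : List Step) (p q : ℕ × ℕ) : Prop :=
  ((p.1 < q.1 ∧ p.2 < q.2) ∨ (q.1 < p.1 ∧ q.2 < p.2)) ∧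
    InRegion ν (max p.1 q.1, min p.2 q.2)

/-- A ν-binary tree: a maximal set of pairwise ν-compatible points of the region. -/
def IsBinaryTree (ν : List Step) (T : Finset (ℕ × ℕ)) : Prop :=
  (∀ p ∈ T, InRegion ν p) ∧ (∀ p ∈ T, ∀ q ∈ T, ¬ Incompat ν p q) ∧
    ∀ r, InRegion ν r → (∀ p ∈ T, ¬ Incompat ν r p) → r ∈ T

/-- A ν-Schröder tree: pairwise ν-compatible points of the region containing the root
`(0,a)` and meeting every row and every column. -/
def IsSchroderTree (ν : List Step) (T : Finset (ℕ × ℕ)) : Prop :=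
  (∀ p ∈ T, InRegion ν p) ∧ (∀ p ∈ T, ∀ q ∈ T, ¬ Incompat ν p q) ∧
    (0, nLen ν) ∈ T ∧ (∀ y ≤ nLen ν, ∃ p ∈ T, p.2 = y) ∧ (∀ x ≤ eLen ν, ∃ p ∈ T, p.1 = x)

/-- One contraction step: delete a node, provided the result is still a ν-Schröder tree. -/
def ContractStep (ν : List Step) (T T' : Finset (ℕ × ℕ)) : Prop :=
  ∃ q ∈ T, T' = T.erase q ∧ IsSchroderTree ν T'

/-- `p` is a leaf of the (plane tree associated to the) node set `T`: no node strictly below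
it in its column and none strictly to its right in its row. -/
def IsLeafIn (T : Finset (ℕ × ℕ)) (p : ℕ × ℕ) : Prop :=
  (∀ q ∈ T, ¬(q.1 = p.1 ∧ q.2 < p.2)) ∧ (∀ q ∈ T, ¬(q.2 = p.2 ∧ p.1 < q.1))

/-- Starting points of vertical runs and ending points of horizontal runs of `ν`. -/
def leafPts (ν : List Step) : Finset (ℕ × ℕ) :=
  (valleyPts ν 0 0).toFinset ∪ (if ν.head? = some Step.N then {((0 : ℕ), (0 : ℕ))} else ∅) ∪
    (if ν.getLast? = some Step.E then {(eLen ν, nLen ν)} else ∅)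

/-- `horizNu ν x y`: maximal number of east steps that can be placed starting at `(x,y)`
before crossing `ν` (staying within the bounding rectangle). -/
def horizNu (ν : List Step) (x y : ℕ) : ℕ :=
  ((Finset.Icc 1 (eLen ν - x)).filter (fun k => lowH ν (x + k) ≤ y)).card

/-- No `N` step of the given path (started at `(x,y)`) has initial point with
`horizNu`-value `h`. -/
def noNAt (ν : List Step) (h : ℕ) : List Step → ℕ → ℕ → Prop
  | [], _, _ => True
  | Step.N :: p, x, y => horizNu ν x y ≠ h ∧ noNAt ν h p x (y+1)
  | Step.E :: p, x, y => noNAt ν h p (x+1) y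
  | Step.D :: p, x, y => noNAt ν h p (x+1) (y+1)

/-- Right contraction: replace a consecutive `EN` pair (a valley) by a `D` step. -/
def RightC (μ lam : List Step) : Prop :=
  ∃ p q, μ = p ++ Step.E :: Step.N :: q ∧ lam = p ++ Step.D :: q

/-- Left contraction: delete an `E` step together with the most recent preceding `N` step
whose initial point has the same `horizNu` statistic as the initial point of the `E` step,
shift the intermediate subpath, and place a `D` step at the initial point of the `N` step. -/
def LeftC (ν μ lam : List Step) : Prop :=
  ∃ p m q, μ = p ++ Step.N :: (m ++ Step.E :: q) ∧ lam = p ++ Step.D :: (m ++ q) ∧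
    horizNu ν (eLen p) (nLen p)
      = horizNu ν (eLen (p ++ Step.N :: m)) (nLen (p ++ Step.N :: m)) ∧
    noNAt ν (horizNu ν (eLen (p ++ Step.N :: m)) (nLen (p ++ Step.N :: m)))
      m (eLen p) (nLen p + 1)

/-- Diagonal contraction: delete an `E` step ending at the initial point `r` of a `D` step,
together with the most recent preceding `N` step whose initial point `s` satisfies
`horizNu s = horizNu r`, shift the intermediate subpath, and place a `D` step at `s`. -/
def DiagC (ν μ lam : List Step) : Prop :=
  ∃ p m q, μ = p ++ Step.N :: (m ++ Step.E :: Step.D :: q) ∧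
    lam = p ++ Step.D :: (m ++ Step.D :: q) ∧
    horizNu ν (eLen p) (nLen p)
      = horizNu ν (eLen (p ++ Step.N :: m) + 1) (nLen (p ++ Step.N :: m)) ∧
    noNAt ν (horizNu ν (eLen (p ++ Step.N :: m) + 1) (nLen (p ++ Step.N :: m)))
      m (eLen p) (nLen p + 1)

/-- Cover relation of the contraction poset of ν-Schröder paths. -/
def Covers (ν μ lam : List Step) : Prop :=
  IsSmallSchroder ν μ ∧ IsSmallSchroder ν lam ∧
    (RightC μ lam ∨ LeftC ν μ lam ∨ DiagC ν μ lam)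

/-- The Morse matching: `σ` (having a `D` step preceded by no valley) is matched with the
path `π` obtained by replacing the first such `D` step by `EN`. -/
def MorseM (ν : List Step) : Set (List Step × List Step) :=
  { z | ∃ p q, Step.D ∉ p ∧ valleys p = 0 ∧
      z.2 = p ++ Step.D :: q ∧ z.1 = p ++ Step.E :: Step.N :: q ∧ IsSmallSchroder ν z.2 }

/-- Twice the area between a small ν-Schröder path and `ν`. -/
def area2 (ν π : List Step) : ℕ :=
  ∑ x ∈ Finset.range (eLen ν), (colVal π x - colVal ν x)

/-- An `(I,J̄)`-forest: increasing, non-crossing arcs. -/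
def IsIJForest (I J : Finset ℕ) (F : Finset (ℕ × ℕ)) : Prop :=
  (∀ a ∈ F, a.1 ∈ I ∧ a.2 ∈ J ∧ a.1 < a.2) ∧
    (∀ a ∈ F, ∀ a' ∈ F, ¬(a.1 < a'.1 ∧ a'.1 < a.2 ∧ a.2 < a'.2))

/-- A covering `(I,J̄)`-forest: contains the arc `(1,n)` and has no isolated node. -/
def IsCoveringForest (n : ℕ) (I J : Finset ℕ) (F : Finset (ℕ × ℕ)) : Prop :=
  IsIJForest I J F ∧ (1, n) ∈ F ∧
    (∀ i ∈ I, ∃ a ∈ F, a.1 = i) ∧ (∀ j ∈ J, ∃ a ∈ F, a.2 = j)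

/-- The lattice path read off from the interleaving of `I` and `J̄` (elements `2,…,n-1`,
`E` for elements of `I`, `N` for the others). -/
def nuOf (n : ℕ) (I : Finset ℕ) : List Step :=
  (List.range' 2 (n - 2)).map (fun k => if k ∈ I then Step.E else Step.N)

/-- In a ν-binary tree, every non-root node has either a node strictly above
it in the same column or a node strictly to its left in the same row, but not both. -/
theorem binaryTree_parent (ν : List Step) (hν : IsLatticePath ν)
    (T : Finset (ℕ × ℕ)) (hT : IsBinaryTree ν T)
    (p : ℕ × ℕ) (hp : p ∈ T) (hroot : p ≠ (0, nLen ν)) :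
    Xor' (∃ q ∈ T, q.1 = p.1 ∧ p.2 < q.2) (∃ q ∈ T, q.2 = p.2 ∧ q.1 < p.1) := by
  obtain ⟨hreg, hcompat, hmax⟩ := hT
  have hlow0 : lowH ν 0 = 0 := by rw [lowH]
  obtain ⟨x, y⟩ := p
  have hpreg : x ≤ eLen ν ∧ y ≤ nLen ν ∧ lowH ν x ≤ y := hreg _ hp
  obtain ⟨hx_le, hy_le, hlow_le⟩ := hpreg
  have hrootmem : ((0 : ℕ), nLen ν) ∈ T := by
    apply hmax
    · exact ⟨Nat.zero_le _, le_refl _, by simp [hlow0]⟩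
    · rintro q hq ⟨h1 | h1, -⟩
      · exact absurd h1.2 (not_lt.2 (hreg q hq).2.1)
      · exact absurd h1.1 (Nat.not_lt_zero _)
  have hnotboth : ¬((∃ q ∈ T, q.1 = x ∧ y < q.2) ∧ (∃ q ∈ T, q.2 = y ∧ q.1 < x)) := by
    rintro ⟨⟨q, hq, hq1, hq2⟩, ⟨r, hr, hr2, hr1⟩⟩
    apply hcompat r hr q hq
    refine ⟨Or.inl ⟨by omega, by omega⟩, ?_⟩
    have e1 : max r.1 q.1 = x := by omega
    have e2 : min r.2 q.2 = y := by omega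
    rw [e1, e2]
    exact ⟨hx_le, hy_le, hlow_le⟩
  have hAB : (∃ q ∈ T, q.1 = x ∧ y < q.2) ∨ (∃ q ∈ T, q.2 = y ∧ q.1 < x) := by
    by_cases hx0 : x = 0
    · subst hx0
      have hy : y < nLen ν := lt_of_le_of_ne hy_le (by rintro rfl; exact hroot rfl)
      exact Or.inl ⟨(0, nLen ν), hrootmem, rfl, hy⟩
    · have hxpos : 0 < x := Nat.pos_of_ne_zero hx0
      set Sh := T.filter (fun q => q.1 < x ∧ y < q.2 ∧ lowH ν q.1 ≤ y) with hShdef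
      set xs := Sh.sup Prod.fst with hxsdef
      have hub : ∀ q ∈ Sh, q.1 ≤ xs := fun q hq => Finset.le_sup hq
      have hxs_lt : xs < x := by
        rw [hxsdef]
        refine (Finset.sup_lt_iff (by exact hxpos)).2 ?_
        intro q hq
        exact (Finset.mem_filter.1 hq).2.1
      have hxs_low : lowH ν xs ≤ y := by
        rcases Finset.eq_empty_or_nonempty Sh with he | hne
        · rw [hxsdef, he]
          simpa [hlow0] using Nat.zero_le y
        · obtain ⟨q, hq, hqe⟩ := Finset.exists_mem_eq_sup Sh hne Prod.fst
          rw [hxsdef, hqe]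
          exact (Finset.mem_filter.1 hq).2.2.2
      by_cases hc : ∀ q ∈ T, ¬ Incompat ν (xs, y) q
      · exact Or.inr ⟨(xs, y), hmax _ ⟨by omega, hy_le, hxs_low⟩ hc, rfl, hxs_lt⟩
      · push_neg at hc
        obtain ⟨q1, hq1T, hinc⟩ := hc
        obtain ⟨hcase, hcorner⟩ := hinc
        obtain ⟨hq1x, hq1y, hq1low⟩ := hreg q1 hq1T
        simp only at hcase hcorner
        rcases hcase with ⟨h1, h2⟩ | ⟨h1, h2⟩
        · -- xs < q1.1, y < q1.2
          have hcor : lowH ν q1.1 ≤ y := by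
            have e1 : max xs q1.1 = q1.1 := by omega
            have e2 : min y q1.2 = y := by omega
            rw [e1, e2] at hcorner
            exact hcorner.2.2
          rcases lt_trichotomy q1.1 x with hlt | heq | hgt
          · exfalso
            have hmem : q1 ∈ Sh := Finset.mem_filter.2 ⟨hq1T, hlt, h2, hcor⟩
            exact absurd (hub q1 hmem) (not_le.2 h1)
          · exact Or.inl ⟨q1, hq1T, heq, h2⟩
          · exfalso
            apply hcompat (x, y) hp q1 hq1T
            refine ⟨Or.inl ⟨hgt, by omega⟩, ?_⟩
            have e1 : max x q1.1 = q1.1 := by omega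
            have e2 : min y q1.2 = y := by omega
            rw [e1, e2]
            exact ⟨hq1x, hy_le, hcor⟩
        · -- q1.1 < xs, q1.2 < y
          exfalso
          have hcor : lowH ν xs ≤ q1.2 := by
            have e1 : max xs q1.1 = xs := by omega
            have e2 : min y q1.2 = q1.2 := by omega
            rw [e1, e2] at hcorner
            exact hcorner.2.2
          have hne : Sh.Nonempty := by
            rcases Finset.eq_empty_or_nonempty Sh with he | hne
            · rw [hxsdef, he] at h1
              simp at h1
            · exact hne
          obtain ⟨q2, hq2, hq2e⟩ := Finset.exists_mem_eq_sup Sh hne Prod.fst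
          obtain ⟨hq2T, hcond⟩ := Finset.mem_filter.1 hq2
          obtain ⟨hq2x, hq2y, hq2low⟩ := hcond
          have hx2 : xs = q2.1 := by rw [hxsdef, hq2e]
          apply hcompat q1 hq1T q2 hq2T
          refine ⟨Or.inl ⟨by omega, by omega⟩, ?_⟩
          have e1 : max q1.1 q2.1 = xs := by omega
          have e2 : min q1.2 q2.2 = q1.2 := by omega
          rw [e1, e2]
          exact ⟨by omega, hq1y, hcor⟩
  rcases hAB with hA | hB
  · exact Or.inl ⟨hA, fun hB => hnotboth ⟨hA, hB⟩⟩
  · exact Or.inr ⟨hB, fun hA => hnotboth ⟨hA, hB⟩⟩
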